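/- Let (d_n) be a sequence of primes. Then the set of x ∈ (0,1] with a_n'(x) = d_n for infinitely many n has Lebesgue measure 1 if ∑_{n≥1} 1/d_n² = ∞, and Lebesgue measure 0 otherwise. -/

import Mathlib

open MeasureTheory Filter Asymptotics Real Topology

/-- The Gauss measure on `(0,1]`, with density `1/(log 2 · (1+x))` w.r.t. Lebesgue measure. -/
noncomputable def gaussMeasure : Measure ℝ :=
  (volume.restrict (Set.Ioc (0:ℝ) 1)).withDensity
    (fun x => ENNReal.ofReal (1 / (Real.log 2 * (1 + x))))

/-- The first continued fraction digit `a(x) = ⌊1/x⌋`. -/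
noncomputable def cfDigit (x : ℝ) : ℕ := ⌊x⁻¹⌋₊

/-- The Gauss map `Sx = 1/x - ⌊1/x⌋`. -/
noncomputable def gaussMap (x : ℝ) : ℝ := Int.fract x⁻¹

/-- The prime digit function `a'(x)`: the first CF digit if it is prime, else `0`. -/
noncomputable def primeDigitVal (x : ℝ) : ℕ :=
  if (cfDigit x).Prime then cfDigit x else 0
open MeasureTheory Filter Asymptotics Real Topology
open scoped ENNReal
/-- basic facts -/
lemma gaussMap_mem_Ico (x : ℝ) : gaussMap x ∈ Set.Ico (0:ℝ) 1 :=
  ⟨Int.fract_nonneg _, Int.fract_lt_one _⟩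

lemma gaussMap_zero : gaussMap 0 = 0 := by simp [gaussMap]

lemma gaussMap_iter_zero (k : ℕ) : gaussMap^[k] (0:ℝ) = 0 := by
  induction k with
  | zero => rfl
  | succ n ih => rw [Function.iterate_succ_apply', ih, gaussMap_zero]

lemma measurable_gaussMap : Measurable gaussMap :=
  measurable_fract.comp measurable_inv

def Ik (p : ℕ) : Set ℝ := Set.Ioc ((p:ℝ)+1)⁻¹ (p:ℝ)⁻¹

lemma mem_Ik_iff {p : ℕ} (hp : 1 ≤ p) {y : ℝ} : y ∈ Ik p ↔ cfDigit y = p := by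
  have hp' : (0:ℝ) < p := by exact_mod_cast hp
  constructor
  · rintro ⟨h1, h2⟩
    have hy : 0 < y := lt_trans (by positivity) h1
    have hyp : (p:ℝ) ≤ y⁻¹ := by
      rw [le_inv_comm₀ hp' hy]; exact h2
    have hyp2 : y⁻¹ < (p:ℝ) + 1 :=
      (inv_lt_comm₀ (by positivity) hy).mp h1
    unfold cfDigit
    rw [Nat.floor_eq_iff (by positivity)]
    exact ⟨by exact_mod_cast hyp, by exact_mod_cast hyp2⟩
  · intro h
    unfold cfDigit at h
    have hy : 0 < y := by
      by_contra hy
      push_neg at hy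
      have : y⁻¹ ≤ 0 := inv_nonpos.mpr hy
      have : ⌊y⁻¹⌋₊ = 0 := Nat.floor_eq_zero.mpr (lt_of_le_of_lt this one_pos)
      omega
    rw [Nat.floor_eq_iff (by positivity)] at h
    obtain ⟨h1, h2⟩ := h
    have h1' : (p:ℝ) ≤ y⁻¹ := by exact_mod_cast h1
    have h2' : y⁻¹ < (p:ℝ) + 1 := by exact_mod_cast h2
    constructor
    · rw [inv_lt_comm₀ (by positivity) hy]; exact h2'
    · rw [le_inv_comm₀ hp' hy] at h1'; exact h1'

lemma mem_Ik_iff_prime {p : ℕ} (hp : p.Prime) {y : ℝ} :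
    y ∈ Ik p ↔ primeDigitVal y = p := by
  rw [mem_Ik_iff hp.one_lt.le]
  unfold primeDigitVal
  constructor
  · intro h; rw [h, if_pos hp]
  · intro h
    by_cases hc : (cfDigit y).Prime
    · rwa [if_pos hc] at h
    · rw [if_neg hc] at h; exact absurd hp.two_le (by omega)

lemma Ik_subset_Ioc {p : ℕ} (hp : 1 ≤ p) : Ik p ⊆ Set.Ioc (0:ℝ) 1 := by
  have hp' : (0:ℝ) < p := by exact_mod_cast hp
  intro y hy
  exact ⟨lt_trans (by positivity) hy.1,
    le_trans hy.2 (by rw [inv_le_one_iff₀]; right; exact_mod_cast hp)⟩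

lemma Ik_subset_Ico {p : ℕ} (hp : 2 ≤ p) : Ik p ⊆ Set.Ico (0:ℝ) 1 := by
  have hp' : (2:ℝ) ≤ p := by exact_mod_cast hp
  intro y hy
  refine ⟨le_of_lt (lt_trans (by positivity) hy.1), lt_of_le_of_lt hy.2 ?_⟩
  rw [inv_lt_one_iff₀]; right; linarith

lemma measurableSet_Ik (p : ℕ) : MeasurableSet (Ik p) := measurableSet_Ioc

lemma telescope (t : ℝ) (ht : 0 ≤ t) :
    HasSum (fun k : ℕ => (((k:ℝ)+1+t) * ((k:ℝ)+2+t))⁻¹) (1+t)⁻¹ := by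
  have hnn : ∀ k : ℕ, (0:ℝ) ≤ (((k:ℝ)+1+t) * ((k:ℝ)+2+t))⁻¹ := fun k => by positivity
  rw [hasSum_iff_tendsto_nat_of_nonneg hnn]
  have hterm : ∀ k : ℕ, (((k:ℝ)+1+t) * ((k:ℝ)+2+t))⁻¹
      = ((k:ℝ)+1+t)⁻¹ - (((k+1:ℕ):ℝ)+1+t)⁻¹ := by
    intro k
    have h1 : ((k:ℝ)+1+t) ≠ 0 := by positivity
    have h2 : ((k:ℝ)+2+t) ≠ 0 := by positivity
    push_cast
    rw [eq_sub_iff_add_eq]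
    field_simp
    ring
  have hsum : ∀ n : ℕ, ∑ i ∈ Finset.range n, (((i:ℝ)+1+t) * ((i:ℝ)+2+t))⁻¹
      = (((0:ℕ):ℝ)+1+t)⁻¹ - ((n:ℝ)+1+t)⁻¹ := by
    intro n
    calc ∑ i ∈ Finset.range n, (((i:ℝ)+1+t) * ((i:ℝ)+2+t))⁻¹
        = ∑ i ∈ Finset.range n, ((((i:ℕ):ℝ)+1+t)⁻¹ - (((i+1:ℕ):ℝ)+1+t)⁻¹) :=
          Finset.sum_congr rfl fun i _ => hterm i
      _ = (((0:ℕ):ℝ)+1+t)⁻¹ - ((n:ℝ)+1+t)⁻¹ :=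
          Finset.sum_range_sub' (fun i : ℕ => (((i:ℕ):ℝ)+1+t)⁻¹) n
  simp only [hsum]
  have h0 : Tendsto (fun n : ℕ => ((n:ℝ)+1+t)⁻¹) atTop (𝓝 0) := by
    apply tendsto_inv_atTop_zero.comp
    apply tendsto_atTop_add_const_right
    exact tendsto_atTop_add_const_right atTop 1 tendsto_natCast_atTop_atTop
  have := ((tendsto_const_nhds (x := (((0:ℕ):ℝ)+1+t)⁻¹)).sub h0)
  simpa using this

lemma telescope_ennreal (t : ℝ) (ht : 0 ≤ t) :
    ∑' k : ℕ, ENNReal.ofReal ((((k:ℝ)+1+t) * ((k:ℝ)+2+t))⁻¹) = ENNReal.ofReal (1+t)⁻¹ := by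
  rw [← ENNReal.ofReal_tsum_of_nonneg (fun k => by positivity) (telescope t ht).summable,
    (telescope t ht).tsum_eq]

lemma telescope_drop (t : ℝ) (ht : 0 ≤ t) (k₀ : ℕ) :
    ∑' k : ℕ, ENNReal.ofReal
        (if k = k₀ then 0 else (((k:ℝ)+1+t) * ((k:ℝ)+2+t))⁻¹)
      = ENNReal.ofReal ((1+t)⁻¹ - (((k₀:ℝ)+1+t) * ((k₀:ℝ)+2+t))⁻¹) := by
  set a : ℕ → ℝ := fun k => (((k:ℝ)+1+t) * ((k:ℝ)+2+t))⁻¹ with ha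
  have hs : Summable a := (telescope t ht).summable
  have hnn : ∀ k, 0 ≤ (if k = k₀ then 0 else a k) := by
    intro k; split
    · exact le_refl 0
    · positivity
  have hs' : Summable (fun k => if k = k₀ then 0 else a k) := by
    apply Summable.of_nonneg_of_le hnn (fun k => ?_) hs
    split
    · positivity
    · exact le_refl _
  have key : ∑' k, (if k = k₀ then 0 else a k) = (1+t)⁻¹ - a k₀ := by
    have h1 := hs.tsum_eq_add_tsum_ite k₀
    rw [(telescope t ht).tsum_eq] at h1
    linarith
  calc ∑' k : ℕ, ENNReal.ofReal (if k = k₀ then 0 else a k)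
      = ENNReal.ofReal (∑' k, (if k = k₀ then 0 else a k)) :=
        (ENNReal.ofReal_tsum_of_nonneg hnn hs').symm
    _ = ENNReal.ofReal ((1+t)⁻¹ - a k₀) := by rw [key]
lemma lintegral_image_1d {s : Set ℝ} {f f' : ℝ → ℝ} (hs : MeasurableSet s)
    (hf' : ∀ x ∈ s, HasDerivWithinAt f (f' x) s x) (hf : Set.InjOn f s) (g : ℝ → ℝ≥0∞) :
    ∫⁻ x in f '' s, g x = ∫⁻ x in s, ENNReal.ofReal |f' x| * g (f x) := by
  simpa only [ContinuousLinearMap.det_toSpanSingleton] using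
    lintegral_image_eq_lintegral_abs_det_fderiv_mul volume hs
      (fun x hx => (hf' x hx).hasFDerivWithinAt) hf g

/-- the transfer operator -/
noncomputable def Gop (F : ℝ → ℝ≥0∞) (t : ℝ) : ℝ≥0∞ :=
  ∑' k : ℕ, F (((k:ℝ)+1+t)⁻¹) * ENNReal.ofReal ((((k:ℝ)+1+t)^2)⁻¹)

lemma measurable_Top {F : ℝ → ℝ≥0∞} (hF : Measurable F) : Measurable (Gop F) := by
  apply Measurable.ennreal_tsum
  intro k
  apply Measurable.mul
  · exact hF.comp ((measurable_const.add measurable_id).inv)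
  · exact (measurable_const.add measurable_id).pow_const 2 |>.inv.ennreal_ofReal

lemma hmap_hasDeriv (k : ℕ) {B : Set ℝ} (t : ℝ) (ht : t ∈ B) (hB1 : B ⊆ Set.Ico 0 1) :
    HasDerivWithinAt (fun t : ℝ => (((k:ℝ)+1+t))⁻¹) (-1 / (((k:ℝ)+1+t)^2)) B t := by
  have h0 : ((k:ℝ)+1+t) ≠ 0 := by
    have := (hB1 ht).1; positivity
  have h1 : HasDerivAt (fun t : ℝ => ((k:ℝ)+1+t)) 1 t := (hasDerivAt_id t).const_add _
  exact (h1.inv h0).hasDerivWithinAt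

lemma core {G : ℝ → ℝ≥0∞} (hG : Measurable G) {B : Set ℝ} (hB : MeasurableSet B)
    (hB1 : B ⊆ Set.Ico 0 1) :
    ∫⁻ x in Set.Ioc (0:ℝ) 1 ∩ gaussMap ⁻¹' B, G x = ∫⁻ t in B, Gop G t := by
  set piece : ℕ → Set ℝ := fun k => (fun t : ℝ => (((k:ℝ)+1+t))⁻¹) '' B with hpiece
  have hpos : ∀ (k : ℕ) {t : ℝ}, t ∈ B → (0:ℝ) < (k:ℝ)+1+t := by
    intro k t ht
    have := (hB1 ht).1; positivity
  -- description as preimage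
  have hpre : ∀ k : ℕ, piece k = (fun x : ℝ => x⁻¹ - ((k:ℝ)+1)) ⁻¹' B ∩ Set.Ioi 0 := by
    intro k
    ext x
    constructor
    · rintro ⟨t, ht, rfl⟩
      have h0 := hpos k ht
      refine ⟨?_, Set.mem_Ioi.mpr (by positivity)⟩
      simp only [Set.mem_preimage, inv_inv]
      have he : (k:ℝ)+1+t - ((k:ℝ)+1) = t := by ring
      rw [he]; exact ht
    · rintro ⟨hx1, hx2⟩
      have hx2' : (0:ℝ) < x := hx2
      refine ⟨x⁻¹ - ((k:ℝ)+1), hx1, ?_⟩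
      show ((k:ℝ)+1+(x⁻¹ - ((k:ℝ)+1)))⁻¹ = x
      rw [show (k:ℝ)+1+(x⁻¹ - ((k:ℝ)+1)) = x⁻¹ by ring, inv_inv]
  -- measurability
  have hmeas : ∀ k : ℕ, MeasurableSet (piece k) := by
    intro k
    rw [hpre k]
    exact (((measurable_inv.sub measurable_const)) hB).inter measurableSet_Ioi
  -- decomposition
  have hdecomp : Set.Ioc (0:ℝ) 1 ∩ gaussMap ⁻¹' B = ⋃ k : ℕ, piece k := by
    ext x
    constructor
    · rintro ⟨⟨hx0, hx1⟩, hxB⟩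
      have hinv1 : (1:ℝ) ≤ x⁻¹ := (one_le_inv_iff₀.mpr ⟨hx0, hx1⟩)
      set n : ℤ := ⌊x⁻¹⌋ with hn
      have hn1 : 1 ≤ n := by
        rwa [hn, Int.le_floor, Int.cast_one]
      set t : ℝ := Int.fract x⁻¹ with htdef
      have htB : t ∈ B := hxB
      refine Set.mem_iUnion.mpr ⟨(n - 1).toNat, t, htB, ?_⟩
      have hcast : (((n - 1).toNat : ℝ)) = (n : ℝ) - 1 := by
        have : ((n-1).toNat : ℤ) = n - 1 := Int.toNat_of_nonneg (by omega)
        exact_mod_cast congrArg (Int.cast : ℤ → ℝ) this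
      have hnt : ((n:ℝ)) + t = x⁻¹ := by
        rw [htdef, Int.fract, ← hn]; ring
      rw [hcast]
      show ((n:ℝ) - 1 + 1 + t)⁻¹ = x
      rw [show (n:ℝ) - 1 + 1 + t = (n:ℝ) + t by ring, hnt, inv_inv]
    · intro hx
      obtain ⟨k, t, ht, rfl⟩ := Set.mem_iUnion.mp hx
      have h0 := hpos k ht
      have ht01 := hB1 ht
      have h1 : (1:ℝ) ≤ (k:ℝ)+1+t := by
        have : (0:ℝ) ≤ (k:ℝ) := Nat.cast_nonneg k
        have := ht01.1; linarith
      constructor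
      · exact ⟨by positivity, inv_le_one_of_one_le₀ h1⟩
      · show gaussMap _ ∈ B
        unfold gaussMap
        rw [inv_inv]
        have : ((k:ℝ)+1+t) = ((k+1 : ℤ) : ℝ) + t := by push_cast; ring
        rw [this, Int.fract_intCast_add, Int.fract_eq_self.mpr ⟨ht01.1, ht01.2⟩]
        exact ht
  -- disjointness
  have hdisj : Pairwise (Function.onFun Disjoint piece) := by
    intro i j hij
    rw [Function.onFun, Set.disjoint_left]
    rintro x ⟨s, hs, hxs⟩ ⟨u, hu, hxu⟩
    have his := hpos i hs
    have hju := hpos j hu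
    have heq : (i:ℝ)+1+s = (j:ℝ)+1+u := by
      have h2 : ((i:ℝ)+1+s)⁻¹ = ((j:ℝ)+1+u)⁻¹ := hxs.trans hxu.symm
      exact inv_injective h2
    have hs01 := hB1 hs
    have hu01 := hB1 hu
    rcases Nat.lt_or_ge i j with h | h
    · have : (i:ℝ) + 1 ≤ (j:ℝ) := by exact_mod_cast Nat.succ_le_of_lt h
      have := hs01.2; have := hu01.1
      linarith
    · rcases Nat.lt_or_ge j i with h' | h'
      · have : (j:ℝ) + 1 ≤ (i:ℝ) := by exact_mod_cast Nat.succ_le_of_lt h'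
        have := hu01.2; have := hs01.1
        linarith
      · exact absurd (Nat.le_antisymm h' h) hij
  -- change of variables on each piece
  have hcov : ∀ k : ℕ, ∫⁻ x in piece k, G x
      = ∫⁻ t in B, G ((((k:ℝ)+1+t))⁻¹) * ENNReal.ofReal ((((k:ℝ)+1+t)^2)⁻¹) := by
    intro k
    rw [hpiece]
    rw [lintegral_image_1d hB (fun t ht => hmap_hasDeriv k t ht hB1)
      (fun s hs u hu h => by
        have := hpos k hs; have := hpos k hu
        have heq : (k:ℝ)+1+s = (k:ℝ)+1+u := inv_injective h
        linarith) G]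
    apply lintegral_congr_ae
    filter_upwards [ae_restrict_mem hB] with t ht
    have h0 := hpos k ht
    rw [abs_div, abs_neg, abs_one, abs_of_pos (by positivity), mul_comm, one_div]
  rw [hdecomp, lintegral_iUnion hmeas hdisj]
  simp only [hcov]
  unfold Gop
  refine (lintegral_tsum (f := fun (k : ℕ) (t : ℝ) =>
      G (((k:ℝ)+1+t))⁻¹ * ENNReal.ofReal ((((k:ℝ)+1+t)^2)⁻¹)) (fun k => ?_)).symm
  apply Measurable.aemeasurable
  apply Measurable.mul
  · exact hG.comp ((measurable_const.add measurable_id).inv)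
  · exact ((measurable_const.add measurable_id).pow_const 2).inv.ennreal_ofReal

noncomputable def FN (D : ℕ → Set ℝ) : ℕ → ℝ → ℝ≥0∞
  | 0 => (Set.Ioc (0:ℝ) 1).indicator 1
  | (N+1) => Gop ((D N).indicator (FN D N))

lemma measurable_FN (D : ℕ → Set ℝ) (hD : ∀ j, MeasurableSet (D j)) (N : ℕ) :
    Measurable (FN D N) := by
  induction N with
  | zero => exact measurable_one.indicator measurableSet_Ioc
  | succ N ih => exact measurable_Top (ih.indicator (hD N))

lemma master (D : ℕ → Set ℝ) (hD : ∀ j, MeasurableSet (D j)) (hD1 : ∀ j, D j ⊆ Set.Ioc 0 1)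
    (N : ℕ) {B : Set ℝ} (hB : MeasurableSet B) (hB1 : B ⊆ Set.Ico 0 1) :
    volume ((⋂ j ∈ Finset.range N, (gaussMap^[j]) ⁻¹' (D j))
        ∩ ((gaussMap^[N]) ⁻¹' B) ∩ Set.Ioc 0 1)
      = ∫⁻ t in B, FN D N t := by
  induction N generalizing B with
  | zero =>
      simp only [Finset.range_zero, Finset.notMem_empty, Set.iInter_of_empty,
        Set.iInter_univ, Set.univ_inter, Function.iterate_zero, Set.preimage_id]
      rw [FN, setLIntegral_indicator measurableSet_Ioc]
      simp only [Pi.one_apply]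
      rw [setLIntegral_one, Set.inter_comm]
  | succ N ih =>
      set B' := D N ∩ gaussMap ⁻¹' B ∩ Set.Ico 0 1 with hB'def
      have hB'm : MeasurableSet B' :=
        ((hD N).inter (measurable_gaussMap hB)).inter measurableSet_Ico
      have hB'1 : B' ⊆ Set.Ico 0 1 := Set.inter_subset_right
      have hIH := ih hB'm hB'1
      set T1 := (⋂ j ∈ Finset.range (N+1), (gaussMap^[j]) ⁻¹' (D j))
        ∩ ((gaussMap^[N+1]) ⁻¹' B) ∩ Set.Ioc 0 1 with hT1
      set T2 := (⋂ j ∈ Finset.range N, (gaussMap^[j]) ⁻¹' (D j))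
        ∩ ((gaussMap^[N]) ⁻¹' B') ∩ Set.Ioc 0 1 with hT2
      have hsub1 : T2 ⊆ T1 := by
        rintro x ⟨⟨hx1, hx2⟩, hx3⟩
        obtain ⟨⟨hD', hBB⟩, _⟩ : (gaussMap^[N] x ∈ D N ∧ gaussMap^[N] x ∈ gaussMap ⁻¹' B)
            ∧ gaussMap^[N] x ∈ Set.Ico 0 1 := hx2
        refine ⟨⟨?_, ?_⟩, hx3⟩
        · rw [Set.mem_iInter₂]
          intro j hj
          rcases Nat.lt_or_ge j N with h | h
          · exact Set.mem_iInter₂.mp hx1 j (Finset.mem_range.mpr h)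
          · have : j = N := by
              have := Finset.mem_range.mp hj; omega
            subst this; exact hD'
        · show x ∈ gaussMap^[N+1] ⁻¹' B
          rw [Set.mem_preimage, Function.iterate_succ_apply']
          exact hBB
      have hsub2 : T1 ⊆ T2 ∪ {1} := by
        rintro x ⟨⟨hx1, hx2⟩, hx3⟩
        have hDN : gaussMap^[N] x ∈ D N :=
          Set.mem_iInter₂.mp hx1 N (Finset.mem_range.mpr (Nat.lt_succ_self N))
        have hDN' := hD1 N hDN
        have hBB : gaussMap (gaussMap^[N] x) ∈ B := by
          have := Set.mem_preimage.mp hx2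
          rwa [Function.iterate_succ_apply'] at this
        by_cases hlt : gaussMap^[N] x < 1
        · left
          refine ⟨⟨?_, ?_⟩, hx3⟩
          · rw [Set.mem_iInter₂]
            intro j hj
            exact Set.mem_iInter₂.mp hx1 j
              (Finset.mem_range.mpr (Nat.lt_succ_of_lt (Finset.mem_range.mp hj)))
          · exact ⟨⟨hDN, hBB⟩, ⟨le_of_lt hDN'.1, hlt⟩⟩
        · right
          push_neg at hlt
          have h1 : gaussMap^[N] x = 1 := le_antisymm hDN'.2 hlt
          rcases Nat.eq_zero_or_pos N with h0 | h0
          · subst h0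
            simpa using h1
          · exfalso
            obtain ⟨M, rfl⟩ := Nat.exists_eq_succ_of_ne_zero (Nat.pos_iff_ne_zero.mp h0)
            rw [Function.iterate_succ_apply'] at h1
            exact absurd h1 (ne_of_lt (gaussMap_mem_Ico _).2)
      have hvol : volume T1 = volume T2 := by
        refine le_antisymm ?_ (measure_mono hsub1)
        calc volume T1 ≤ volume (T2 ∪ {1}) := measure_mono hsub2
          _ ≤ volume T2 + volume ({1} : Set ℝ) := measure_union_le _ _
          _ = volume T2 := by rw [Real.volume_singleton, add_zero]
      rw [hvol, hIH]
      have hae : B' =ᵐ[volume] (D N ∩ gaussMap ⁻¹' B : Set ℝ) := by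
        rw [MeasureTheory.ae_eq_set]
        constructor
        · have he : B' \ (D N ∩ gaussMap ⁻¹' B : Set ℝ) = ∅ :=
            Set.diff_eq_empty.mpr Set.inter_subset_left
          rw [he]; exact measure_empty
        · refine measure_mono_null ?_ (Real.volume_singleton (a := 1))
          rintro t ⟨⟨htD, htB⟩, ht'⟩
          have h01 := hD1 N htD
          simp only [Set.mem_singleton_iff]
          by_contra hne
          exact ht' ⟨⟨htD, htB⟩, ⟨le_of_lt h01.1, lt_of_le_of_ne h01.2 hne⟩⟩
      rw [setLIntegral_congr hae]
      have hrw : D N ∩ gaussMap ⁻¹' B = D N ∩ (Set.Ioc 0 1 ∩ gaussMap ⁻¹' B) := by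
        rw [← Set.inter_assoc, Set.inter_eq_self_of_subset_left (hD1 N)]
      rw [hrw, ← setLIntegral_indicator (hD N), core ((measurable_FN D hD N).indicator (hD N)) hB hB1]
      rfl

lemma hmem_Ioc (k : ℕ) {t : ℝ} (ht : t ∈ Set.Icc (0:ℝ) 1) :
    (((k:ℝ)+1+t))⁻¹ ∈ Set.Ioc (0:ℝ) 1 := by
  have h1 : (1:ℝ) ≤ (k:ℝ)+1+t := by
    have : (0:ℝ) ≤ (k:ℝ) := Nat.cast_nonneg k
    have := ht.1; linarith
  exact ⟨by positivity, inv_le_one_of_one_le₀ h1⟩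

lemma weight_eq (k : ℕ) {t : ℝ} (ht : t ∈ Set.Icc (0:ℝ) 1) :
    (1+(((k:ℝ)+1+t))⁻¹)⁻¹ * ((((k:ℝ)+1+t))^2)⁻¹ = (((k:ℝ)+1+t) * ((k:ℝ)+2+t))⁻¹ := by
  have h1 : (0:ℝ) < (k:ℝ)+1+t := by have := ht.1; positivity
  have h2 : (0:ℝ) < (k:ℝ)+2+t := by have := ht.1; positivity
  have h3 : (1:ℝ)+((k:ℝ)+1+t)⁻¹ = ((k:ℝ)+2+t) / ((k:ℝ)+1+t) := by
    field_simp; ring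
  rw [h3]
  field_simp

lemma boundA {F : ℝ → ℝ≥0∞} {c : ℝ} (hc : 0 ≤ c)
    (hF : ∀ t ∈ Set.Icc (0:ℝ) 1, F t ≤ ENNReal.ofReal (c * (1+t)⁻¹)) :
    ∀ t ∈ Set.Icc (0:ℝ) 1, Gop ((Set.Ioc (0:ℝ) 1).indicator F) t
      ≤ ENNReal.ofReal (c * (1+t)⁻¹) := by
  intro t ht
  have hterm : ∀ k : ℕ, (Set.Ioc (0:ℝ) 1).indicator F ((((k:ℝ)+1+t))⁻¹)
      * ENNReal.ofReal ((((k:ℝ)+1+t)^2)⁻¹)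
      ≤ ENNReal.ofReal c * ENNReal.ofReal ((((k:ℝ)+1+t) * ((k:ℝ)+2+t))⁻¹) := by
    intro k
    have hmem := hmem_Ioc k ht
    rw [Set.indicator_of_mem hmem]
    have hF' := hF _ ⟨le_of_lt hmem.1, hmem.2⟩
    have hx : (0:ℝ) < (k:ℝ)+1+t := by have := ht.1; positivity
    have hinv : (0:ℝ) ≤ (1+(((k:ℝ)+1+t))⁻¹)⁻¹ :=
      le_of_lt (inv_pos.mpr (by linarith [inv_pos.mpr hx]))
    calc F ((((k:ℝ)+1+t))⁻¹) * ENNReal.ofReal ((((k:ℝ)+1+t)^2)⁻¹)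
        ≤ ENNReal.ofReal (c * (1+(((k:ℝ)+1+t))⁻¹)⁻¹) * ENNReal.ofReal ((((k:ℝ)+1+t)^2)⁻¹) :=
          mul_le_mul_left hF' _
      _ = ENNReal.ofReal c * ENNReal.ofReal ((((k:ℝ)+1+t) * ((k:ℝ)+2+t))⁻¹) := by
          rw [ENNReal.ofReal_mul hc, mul_assoc, ← ENNReal.ofReal_mul hinv,
            weight_eq k ht]
  calc Gop ((Set.Ioc (0:ℝ) 1).indicator F) t
      ≤ ∑' k : ℕ, ENNReal.ofReal c * ENNReal.ofReal ((((k:ℝ)+1+t) * ((k:ℝ)+2+t))⁻¹) :=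
        ENNReal.tsum_le_tsum hterm
    _ = ENNReal.ofReal c * ENNReal.ofReal ((1+t)⁻¹) := by
        rw [ENNReal.tsum_mul_left, telescope_ennreal t ht.1]
    _ = ENNReal.ofReal (c * (1+t)⁻¹) := (ENNReal.ofReal_mul hc).symm

lemma boundB {F : ℝ → ℝ≥0∞} {c : ℝ} (hc : 0 ≤ c) {p : ℕ} (hp : 2 ≤ p)
    {C : Set ℝ} (hC : C ∩ Ik p = ∅)
    (hF : ∀ t ∈ Set.Icc (0:ℝ) 1, F t ≤ ENNReal.ofReal (c * (1+t)⁻¹)) :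
    ∀ t ∈ Set.Icc (0:ℝ) 1, Gop (C.indicator F) t
      ≤ ENNReal.ofReal ((c * (1 - (((p:ℝ)+1) * ((p:ℝ)+2))⁻¹)) * (1+t)⁻¹) := by
  intro t ht
  have hp' : (2:ℝ) ≤ (p:ℝ) := by exact_mod_cast hp
  have ht0 : (0:ℝ) ≤ t := ht.1
  have ht1 : t ≤ 1 := ht.2
  -- choose the dropped index
  obtain ⟨k₀, hmemIk, hkey⟩ : ∃ k₀ : ℕ, (((k₀:ℝ)+1+t))⁻¹ ∈ Ik p ∧
      ((k₀:ℝ)+1+t) * ((k₀:ℝ)+2+t) ≤ ((p:ℝ)+1) * ((p:ℝ)+2) * (1+t) := by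
    rcases lt_or_eq_of_le ht.2 with hlt | heq
    · refine ⟨p - 1, ?_, ?_⟩
      · have hcast : ((p-1:ℕ):ℝ) = (p:ℝ) - 1 := by
          have : 1 ≤ p := by omega
          push_cast [this]; ring
        rw [hcast, show (p:ℝ)-1+1+t = (p:ℝ)+t by ring]
        constructor
        · rw [inv_lt_inv₀ (by linarith) (by linarith)]
          linarith
        · rw [inv_le_inv₀ (by linarith) (by linarith)]
          exact le_add_of_nonneg_right ht0
      · have hcast : ((p-1:ℕ):ℝ) = (p:ℝ) - 1 := by
          have : 1 ≤ p := by omega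
          push_cast [this]; ring
        rw [hcast]
        have htsq : t^2 ≤ 1 := by nlinarith
        nlinarith [htsq, mul_nonneg ht0 (mul_nonneg (by linarith : (0:ℝ)≤(p:ℝ)) (by linarith : (0:ℝ)≤(p:ℝ))), mul_nonneg ht0 (by linarith : (0:ℝ)≤(p:ℝ))]
    · subst heq
      refine ⟨p - 2, ?_, ?_⟩
      · have hcast : ((p-2:ℕ):ℝ) = (p:ℝ) - 2 := by
          push_cast [hp]; ring
        rw [hcast, show (p:ℝ)-2+1+1 = (p:ℝ) by ring]
        constructor
        · rw [inv_lt_inv₀ (by linarith) (by linarith)]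
          linarith
        · exact le_refl _
      · have hcast : ((p-2:ℕ):ℝ) = (p:ℝ) - 2 := by
          push_cast [hp]; ring
        rw [hcast]
        nlinarith [hp', sq_nonneg ((p:ℝ))]
  have hx0 : (0:ℝ) < (k₀:ℝ)+1+t := by have := ht.1; positivity
  have hy0 : (0:ℝ) < (k₀:ℝ)+2+t := by have := ht.1; positivity
  -- termwise bound
  have hterm : ∀ k : ℕ, C.indicator F ((((k:ℝ)+1+t))⁻¹)
      * ENNReal.ofReal ((((k:ℝ)+1+t)^2)⁻¹)
      ≤ ENNReal.ofReal c * ENNReal.ofReal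
          (if k = k₀ then 0 else (((k:ℝ)+1+t) * ((k:ℝ)+2+t))⁻¹) := by
    intro k
    by_cases hk : k = k₀
    · subst hk
      have : (((k:ℝ)+1+t))⁻¹ ∉ C := by
        intro hmem
        have : (((k:ℝ)+1+t))⁻¹ ∈ C ∩ Ik p := ⟨hmem, hmemIk⟩
        rw [hC] at this
        exact this
      rw [Set.indicator_of_notMem this, zero_mul, if_pos rfl]
      exact zero_le
    · rw [if_neg hk]
      have hmem := hmem_Ioc k ht
      have hF' := hF _ ⟨le_of_lt hmem.1, hmem.2⟩
      have hx : (0:ℝ) < (k:ℝ)+1+t := by have := ht.1; positivity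
      have hinv : (0:ℝ) ≤ (1+(((k:ℝ)+1+t))⁻¹)⁻¹ :=
        le_of_lt (inv_pos.mpr (by linarith [inv_pos.mpr hx]))
      calc C.indicator F ((((k:ℝ)+1+t))⁻¹) * ENNReal.ofReal ((((k:ℝ)+1+t)^2)⁻¹)
          ≤ F ((((k:ℝ)+1+t))⁻¹) * ENNReal.ofReal ((((k:ℝ)+1+t)^2)⁻¹) :=
            mul_le_mul_left (Set.indicator_le_self _ _ _) _
        _ ≤ ENNReal.ofReal (c * (1+(((k:ℝ)+1+t))⁻¹)⁻¹) * ENNReal.ofReal ((((k:ℝ)+1+t)^2)⁻¹) :=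
            mul_le_mul_left hF' _
        _ = ENNReal.ofReal c * ENNReal.ofReal ((((k:ℝ)+1+t) * ((k:ℝ)+2+t))⁻¹) := by
            rw [ENNReal.ofReal_mul hc, mul_assoc, ← ENNReal.ofReal_mul hinv,
              weight_eq k ht]
  calc Gop (C.indicator F) t
      ≤ ∑' k : ℕ, ENNReal.ofReal c * ENNReal.ofReal
          (if k = k₀ then 0 else (((k:ℝ)+1+t) * ((k:ℝ)+2+t))⁻¹) :=
        ENNReal.tsum_le_tsum hterm
    _ = ENNReal.ofReal c * ENNReal.ofReal
          ((1+t)⁻¹ - (((k₀:ℝ)+1+t) * ((k₀:ℝ)+2+t))⁻¹) := by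
        rw [ENNReal.tsum_mul_left, telescope_drop t ht.1 k₀]
    _ ≤ ENNReal.ofReal c * ENNReal.ofReal ((1 - (((p:ℝ)+1) * ((p:ℝ)+2))⁻¹) * (1+t)⁻¹) := by
        apply mul_le_mul_right
        apply ENNReal.ofReal_le_ofReal
        have h1t : (0:ℝ) < 1 + t := by linarith [ht.1]
        have hE : (0:ℝ) < ((p:ℝ)+1) * ((p:ℝ)+2) := by positivity
        have hinv2 : (((p:ℝ)+1) * ((p:ℝ)+2) * (1+t))⁻¹ ≤ (((k₀:ℝ)+1+t) * ((k₀:ℝ)+2+t))⁻¹ := by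
          apply inv_anti₀ (by positivity) hkey
        have heq2 : (((p:ℝ)+1) * ((p:ℝ)+2) * (1+t))⁻¹
            = (((p:ℝ)+1) * ((p:ℝ)+2))⁻¹ * (1+t)⁻¹ := by
          rw [mul_inv]
        nlinarith [inv_nonneg.mpr (le_of_lt h1t)]
    _ = ENNReal.ofReal ((c * (1 - (((p:ℝ)+1) * ((p:ℝ)+2))⁻¹)) * (1+t)⁻¹) := by
        rw [← ENNReal.ofReal_mul hc, mul_assoc]

lemma FN_base_bound : ∀ t ∈ Set.Icc (0:ℝ) 1,
    (Set.Ioc (0:ℝ) 1).indicator (1 : ℝ → ℝ≥0∞) t ≤ ENNReal.ofReal (2 * (1+t)⁻¹) := by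
  intro t ht
  by_cases h : t ∈ Set.Ioc (0:ℝ) 1
  · rw [Set.indicator_of_mem h, Pi.one_apply]
    rw [show (1:ℝ≥0∞) = ENNReal.ofReal 1 by simp]
    apply ENNReal.ofReal_le_ofReal
    have h1t : (0:ℝ) < 1+t := by linarith [ht.1]
    rw [le_mul_inv_iff₀ h1t]
    linarith [ht.2]
  · rw [Set.indicator_of_notMem h]
    exact zero_le

noncomputable def epsd (d : ℕ → ℕ) (j : ℕ) : ℝ := (((d j:ℝ)+1) * ((d j:ℝ)+2))⁻¹

noncomputable def cN (d : ℕ → ℕ) (m N : ℕ) : ℝ :=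
  2 * ∏ j ∈ Finset.Ico m N, (1 - epsd d j)

def DD (d : ℕ → ℕ) (m : ℕ) (j : ℕ) : Set ℝ :=
  if j < m then Set.Ioc 0 1 else Set.Ioc 0 1 \ Ik (d j)

lemma epsd_nonneg (d : ℕ → ℕ) (j : ℕ) : 0 ≤ epsd d j := by
  unfold epsd; positivity

lemma epsd_le_one (d : ℕ → ℕ) (j : ℕ) : epsd d j ≤ 1 := by
  unfold epsd
  apply inv_le_one_of_one_le₀
  nlinarith [Nat.cast_nonneg (α := ℝ) (d j)]

lemma cN_nonneg (d : ℕ → ℕ) (m N : ℕ) : 0 ≤ cN d m N := by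
  unfold cN
  have : (0:ℝ) ≤ ∏ j ∈ Finset.Ico m N, (1 - epsd d j) :=
    Finset.prod_nonneg fun j _ => by linarith [epsd_le_one d j]
  linarith

lemma DD_measurable (d : ℕ → ℕ) (m j : ℕ) : MeasurableSet (DD d m j) := by
  unfold DD; split
  · exact measurableSet_Ioc
  · exact measurableSet_Ioc.diff (measurableSet_Ik _)

lemma DD_subset (d : ℕ → ℕ) (m j : ℕ) : DD d m j ⊆ Set.Ioc 0 1 := by
  unfold DD; split
  · exact subset_rfl
  · exact Set.diff_subset

lemma FN_bound_univ (N : ℕ) : ∀ t ∈ Set.Icc (0:ℝ) 1,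
    FN (fun _ => Set.Ioc (0:ℝ) 1) N t ≤ ENNReal.ofReal (2 * (1+t)⁻¹) := by
  induction N with
  | zero => exact FN_base_bound
  | succ N ih =>
      intro t ht
      exact boundA (by norm_num) ih t ht

lemma FN_bound_div (d : ℕ → ℕ) (hd : ∀ j, 2 ≤ d j) (m : ℕ) (N : ℕ) :
    ∀ t ∈ Set.Icc (0:ℝ) 1,
      FN (DD d m) N t ≤ ENNReal.ofReal (cN d m N * (1+t)⁻¹) := by
  induction N with
  | zero =>
      have h0 : cN d m 0 = 2 := by
        unfold cN
        rw [Finset.Ico_eq_empty (by omega), Finset.prod_empty, mul_one]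
      rw [h0]
      exact FN_base_bound
  | succ N ih =>
      intro t ht
      show Gop ((DD d m N).indicator (FN (DD d m) N)) t ≤ _
      by_cases hNm : N < m
      · have hD : DD d m N = Set.Ioc 0 1 := if_pos hNm
        have hc : cN d m (N+1) = cN d m N := by
          unfold cN
          rw [Finset.Ico_eq_empty (by omega), Finset.Ico_eq_empty (by omega)]
        rw [hD, hc]
        exact boundA (cN_nonneg d m N) ih t ht
      · push_neg at hNm
        have hD : DD d m N = Set.Ioc 0 1 \ Ik (d N) := if_neg (by omega)
        have hc : cN d m (N+1) = cN d m N * (1 - epsd d N) := by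
          unfold cN
          rw [Finset.prod_Ico_succ_top hNm, mul_assoc]
        rw [hD, hc]
        exact boundB (cN_nonneg d m N) (hd N) (Set.diff_inter_self) ih t ht

lemma countable_gaussMap_preimage {C : Set ℝ} (hC : C.Countable) :
    (gaussMap ⁻¹' C).Countable := by
  have h1 : gaussMap ⁻¹' C ⊆ ⋃ c ∈ C, gaussMap ⁻¹' {c} := by
    intro x hx
    exact Set.mem_biUnion hx rfl
  refine Set.Countable.mono h1 (hC.biUnion fun c _ => ?_)
  have h2 : gaussMap ⁻¹' ({c} : Set ℝ) ⊆
      {0} ∪ Set.range (fun k : ℤ => (c + (k:ℝ))⁻¹) := by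
    intro x hx
    have hx' : Int.fract x⁻¹ = c := hx
    by_cases hx0 : x = 0
    · left; exact hx0
    · right
      refine ⟨⌊x⁻¹⌋, ?_⟩
      have : c + (⌊x⁻¹⌋ : ℝ) = x⁻¹ := by
        rw [← hx', Int.fract]; ring
      show (c + (⌊x⁻¹⌋:ℝ))⁻¹ = x
      rw [this, inv_inv]
  exact Set.Countable.mono h2 ((Set.countable_singleton 0).union (Set.countable_range _))

lemma countable_iter_zero (j : ℕ) : {x : ℝ | gaussMap^[j] x = 0}.Countable := by
  induction j with
  | zero => simpa using Set.countable_singleton (0:ℝ)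
  | succ j ih =>
      have : {x : ℝ | gaussMap^[j+1] x = 0} = gaussMap ⁻¹' {x : ℝ | gaussMap^[j] x = 0} := by
        ext x
        simp [Function.iterate_succ_apply]
      rw [this]
      exact countable_gaussMap_preimage ih

/-- orbit positivity: if the orbit never hits 0 up to time `n` in the sense that
`gaussMap^[n] x ≠ 0` then intermediate iterates are in `(0,1]`. -/
lemma iter_mem_Ioc {x : ℝ} (hx : x ∈ Set.Ioc (0:ℝ) 1) {n j : ℕ} (hj : j ≤ n)
    (hne : gaussMap^[n] x ≠ 0) : gaussMap^[j] x ∈ Set.Ioc (0:ℝ) 1 := by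
  have hjne : gaussMap^[j] x ≠ 0 := by
    intro h0
    apply hne
    have : gaussMap^[n] x = gaussMap^[n-j] (gaussMap^[j] x) := by
      rw [← Function.iterate_add_apply]
      congr 1
      omega
    rw [this, h0, gaussMap_iter_zero]
  rcases Nat.eq_zero_or_pos j with h0 | h0
  · subst h0; exact hx
  · obtain ⟨M, rfl⟩ := Nat.exists_eq_succ_of_ne_zero (Nat.pos_iff_ne_zero.mp h0)
    rw [Function.iterate_succ_apply']
    have := gaussMap_mem_Ico (gaussMap^[M] x)
    exact ⟨lt_of_le_of_ne this.1 (by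
      rw [Function.iterate_succ_apply'] at hjne
      exact fun h => hjne h.symm), le_of_lt this.2⟩

lemma conv_bound (d : ℕ → ℕ) (hd : ∀ n, 2 ≤ d n) (n : ℕ) :
    volume ((gaussMap^[n]) ⁻¹' (Ik (d n)) ∩ Set.Ioc 0 1)
      ≤ ENNReal.ofReal (2 * (((d n):ℝ)^2)⁻¹) := by
  have hdn : (2:ℝ) ≤ ((d n):ℝ) := by exact_mod_cast hd n
  have hIkIco : Ik (d n) ⊆ Set.Ico 0 1 := Ik_subset_Ico (hd n)
  have hsub : (gaussMap^[n]) ⁻¹' (Ik (d n)) ∩ Set.Ioc 0 1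
      ⊆ (⋂ j ∈ Finset.range n, (gaussMap^[j]) ⁻¹' (Set.Ioc (0:ℝ) 1))
        ∩ ((gaussMap^[n]) ⁻¹' (Ik (d n))) ∩ Set.Ioc 0 1 := by
    rintro x ⟨hx1, hx2⟩
    have hne : gaussMap^[n] x ≠ 0 := by
      intro h0
      have := Set.mem_preimage.mp hx1
      rw [h0] at this
      have h1 := this.1
      have : (0:ℝ) < (((d n):ℝ)+1)⁻¹ := by positivity
      linarith
    refine ⟨⟨?_, hx1⟩, hx2⟩
    rw [Set.mem_iInter₂]
    intro j hj
    exact iter_mem_Ioc hx2 (le_of_lt (Finset.mem_range.mp hj)) hne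
  refine le_trans (measure_mono hsub) ?_
  rw [master (fun _ => Set.Ioc 0 1) (fun _ => measurableSet_Ioc) (fun _ => subset_rfl) n
    (measurableSet_Ik _) hIkIco]
  calc ∫⁻ t in Ik (d n), FN (fun _ => Set.Ioc (0:ℝ) 1) n t
      ≤ ∫⁻ _ in Ik (d n), ENNReal.ofReal 2 := by
        apply setLIntegral_mono measurable_const
        intro t htIk
        have ht : t ∈ Set.Icc (0:ℝ) 1 := Set.Ico_subset_Icc_self (hIkIco htIk)
        refine le_trans (FN_bound_univ n t ht) (ENNReal.ofReal_le_ofReal ?_)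
        have h1t : (0:ℝ) < 1 + t := by linarith [ht.1]
        have : (1+t)⁻¹ ≤ 1 := by
          rw [inv_le_one_iff₀]; right; linarith [ht.1]
        linarith
    _ = ENNReal.ofReal 2 * volume (Ik (d n)) := setLIntegral_const _ _
    _ ≤ ENNReal.ofReal (2 * (((d n):ℝ)^2)⁻¹) := by
        unfold Ik
        rw [Real.volume_Ioc, ← ENNReal.ofReal_mul (by norm_num)]
        apply ENNReal.ofReal_le_ofReal
        have h1 : (0:ℝ) < (d n:ℝ) := by linarith
        have h2 : (0:ℝ) < (d n:ℝ)+1 := by linarith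
        have heq : ((d n:ℝ))⁻¹ - ((d n:ℝ)+1)⁻¹ = ((d n:ℝ) * ((d n:ℝ)+1))⁻¹ := by
          field_simp
          ring
        rw [heq]
        have : ((d n:ℝ) * ((d n:ℝ)+1))⁻¹ ≤ (((d n):ℝ)^2)⁻¹ := by
          apply inv_anti₀ (by positivity)
          nlinarith
        linarith

lemma div_bound (d : ℕ → ℕ) (hd : ∀ n, 2 ≤ d n) (m M : ℕ) :
    volume {x ∈ Set.Ioc (0:ℝ) 1 | ∀ n, m ≤ n → gaussMap^[n] x ∉ Ik (d n)}
      ≤ ENNReal.ofReal (cN d m (M+1)) := by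
  set Q : Set ℝ := ⋃ j : ℕ, {x : ℝ | gaussMap^[j] x = 0} with hQ
  have hQ0 : volume Q = 0 :=
    measure_iUnion_null fun j => (countable_iter_zero j).measure_zero _
  set T := (⋂ j ∈ Finset.range (M+1), (gaussMap^[j]) ⁻¹' (DD d m j))
      ∩ ((gaussMap^[M+1]) ⁻¹' (Set.Ico 0 1)) ∩ Set.Ioc (0:ℝ) 1 with hT
  have hsub : {x ∈ Set.Ioc (0:ℝ) 1 | ∀ n, m ≤ n → gaussMap^[n] x ∉ Ik (d n)} ⊆ Q ∪ T := by
    rintro x ⟨hx01, hxK⟩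
    by_cases hxQ : x ∈ Q
    · left; exact hxQ
    · right
      have hne : ∀ j : ℕ, gaussMap^[j] x ≠ 0 := by
        intro j h0
        exact hxQ (Set.mem_iUnion.mpr ⟨j, h0⟩)
      refine ⟨⟨?_, ?_⟩, hx01⟩
      · rw [Set.mem_iInter₂]
        intro j _
        have hj01 : gaussMap^[j] x ∈ Set.Ioc (0:ℝ) 1 :=
          iter_mem_Ioc hx01 le_rfl (hne j)
        unfold DD
        split
        · exact hj01
        · next h =>
            exact ⟨hj01, hxK j (by omega)⟩
      · show gaussMap^[M+1] x ∈ Set.Ico 0 1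
        rw [Function.iterate_succ_apply']
        exact gaussMap_mem_Ico _
  calc volume {x ∈ Set.Ioc (0:ℝ) 1 | ∀ n, m ≤ n → gaussMap^[n] x ∉ Ik (d n)}
      ≤ volume (Q ∪ T) := measure_mono hsub
    _ ≤ volume Q + volume T := measure_union_le _ _
    _ = volume T := by rw [hQ0, zero_add]
    _ ≤ ENNReal.ofReal (cN d m (M+1)) := by
        rw [hT, master (DD d m) (DD_measurable d m) (DD_subset d m) (M+1)
          measurableSet_Ico Set.Subset.rfl]
        calc ∫⁻ t in Set.Ico (0:ℝ) 1, FN (DD d m) (M+1) t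
            ≤ ∫⁻ _ in Set.Ico (0:ℝ) 1, ENNReal.ofReal (cN d m (M+1)) := by
              apply setLIntegral_mono measurable_const
              intro t ht'
              have ht : t ∈ Set.Icc (0:ℝ) 1 := Set.Ico_subset_Icc_self ht'
              refine le_trans (FN_bound_div d hd m (M+1) t ht)
                (ENNReal.ofReal_le_ofReal ?_)
              have h1t : (0:ℝ) < 1 + t := by linarith [ht.1]
              have hinv : (1+t)⁻¹ ≤ 1 := by
                rw [inv_le_one_iff₀]; right; linarith [ht.1]
              nlinarith [cN_nonneg d m (M+1)]
          _ = ENNReal.ofReal (cN d m (M+1)) * volume (Set.Ico (0:ℝ) 1) :=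
              setLIntegral_const _ _
          _ = ENNReal.ofReal (cN d m (M+1)) := by
              rw [Real.volume_Ico]
              norm_num

lemma cN_tendsto (d : ℕ → ℕ) (hd : ∀ n, 2 ≤ d n)
    (hns : ¬ Summable (fun n : ℕ => 1 / (d n : ℝ)^2)) (m : ℕ) :
    Tendsto (fun M => cN d m M) atTop (𝓝 0) := by
  have hnse : ¬ Summable (epsd d) := by
    intro hs
    apply hns
    have hle : ∀ n : ℕ, 1 / ((d n : ℝ))^2 ≤ 6 * epsd d n := by
      intro n
      have hdn : (2:ℝ) ≤ ((d n):ℝ) := by exact_mod_cast hd n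
      unfold epsd
      rw [mul_comm (6:ℝ), inv_mul_eq_div, div_le_div_iff₀ (by positivity) (by positivity)]
      nlinarith
    exact Summable.of_nonneg_of_le (fun n => by positivity) hle (hs.mul_left 6)
  have h1 : Tendsto (fun N => ∑ j ∈ Finset.range N, epsd d j) atTop atTop :=
    (not_summable_iff_tendsto_nat_atTop_of_nonneg (epsd_nonneg d)).mp hnse
  have hsum : Tendsto (fun N => ∑ j ∈ Finset.Ico m N, epsd d j) atTop atTop := by
    apply Tendsto.congr' (f₁ := fun N => (∑ j ∈ Finset.range N, epsd d j)
      - ∑ j ∈ Finset.range m, epsd d j)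
    · filter_upwards [eventually_ge_atTop m] with N hN
      rw [Finset.sum_Ico_eq_sub _ hN]
    · exact tendsto_atTop_add_const_right atTop _ h1
  have hexp : Tendsto (fun N => Real.exp (-(∑ j ∈ Finset.Ico m N, epsd d j)))
      atTop (𝓝 0) :=
    Real.tendsto_exp_atBot.comp (tendsto_neg_atTop_atBot.comp hsum)
  have hprodle : ∀ N : ℕ, ∏ j ∈ Finset.Ico m N, (1 - epsd d j)
      ≤ Real.exp (-(∑ j ∈ Finset.Ico m N, epsd d j)) := by
    intro N
    calc ∏ j ∈ Finset.Ico m N, (1 - epsd d j)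
        ≤ ∏ j ∈ Finset.Ico m N, Real.exp (-(epsd d j)) := by
          apply Finset.prod_le_prod
          · intro j _; linarith [epsd_le_one d j]
          · intro j _; linarith [Real.add_one_le_exp (-(epsd d j))]
      _ = Real.exp (∑ j ∈ Finset.Ico m N, -(epsd d j)) := (Real.exp_sum _ _).symm
      _ = Real.exp (-(∑ j ∈ Finset.Ico m N, epsd d j)) := by rw [Finset.sum_neg_distrib]
  have hprod : Tendsto (fun N => ∏ j ∈ Finset.Ico m N, (1 - epsd d j)) atTop (𝓝 0) := by
    apply squeeze_zero (fun N => Finset.prod_nonneg fun j _ => by linarith [epsd_le_one d j])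
      hprodle hexp
  have := hprod.const_mul (2:ℝ)
  simpa [cN] using this
theorem stmt_18 (d : ℕ → ℕ) (hd : ∀ n, (d n).Prime) :
    (¬ Summable (fun n : ℕ => 1 / (d n : ℝ)^2) →
      volume {x ∈ Set.Ioc (0:ℝ) 1 |
        ∃ᶠ n : ℕ in atTop, primeDigitVal (gaussMap^[n] x) = d n} = 1) ∧
    (Summable (fun n : ℕ => 1 / (d n : ℝ)^2) →
      volume {x ∈ Set.Ioc (0:ℝ) 1 |
        ∃ᶠ n : ℕ in atTop, primeDigitVal (gaussMap^[n] x) = d n} = 0) := by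
  have hd2 : ∀ n, 2 ≤ d n := fun n => (hd n).two_le
  constructor
  · -- divergent case: full measure
    intro hns
    set K : ℕ → Set ℝ := fun m =>
      {x ∈ Set.Ioc (0:ℝ) 1 | ∀ n, m ≤ n → gaussMap^[n] x ∉ Ik (d n)} with hK
    have hK0 : ∀ m, volume (K m) = 0 := by
      intro m
      have h1 : ∀ M : ℕ, volume (K m) ≤ ENNReal.ofReal (cN d m (M+1)) :=
        fun M => div_bound d hd2 m M
      have h2 : Tendsto (fun M : ℕ => ENNReal.ofReal (cN d m (M+1))) atTop (𝓝 0) := by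
        have h3 : Tendsto (fun M : ℕ => ENNReal.ofReal (cN d m M)) atTop (𝓝 0) := by
          have := ENNReal.tendsto_ofReal (cN_tendsto d hd2 hns m)
          simpa using this
        exact h3.comp (tendsto_add_atTop_nat 1)
      exact le_antisymm (ge_of_tendsto' h2 h1) zero_le
    have hsub : Set.Ioc (0:ℝ) 1 ⊆ {x ∈ Set.Ioc (0:ℝ) 1 |
        ∃ᶠ n : ℕ in atTop, primeDigitVal (gaussMap^[n] x) = d n} ∪ ⋃ m, K m := by
      intro x hx
      by_cases hf : ∃ᶠ n : ℕ in atTop, primeDigitVal (gaussMap^[n] x) = d n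
      · left; exact ⟨hx, hf⟩
      · right
        rw [Filter.not_frequently] at hf
        obtain ⟨m, hm⟩ := eventually_atTop.mp hf
        refine Set.mem_iUnion.mpr ⟨m, hx, ?_⟩
        intro n hn hIk
        exact hm n hn ((mem_Ik_iff_prime (hd n)).mp hIk)
    have h1le : volume {x ∈ Set.Ioc (0:ℝ) 1 |
        ∃ᶠ n : ℕ in atTop, primeDigitVal (gaussMap^[n] x) = d n} ≤ 1 := by
      calc volume {x ∈ Set.Ioc (0:ℝ) 1 |
            ∃ᶠ n : ℕ in atTop, primeDigitVal (gaussMap^[n] x) = d n}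
          ≤ volume (Set.Ioc (0:ℝ) 1) := measure_mono (Set.sep_subset _ _)
        _ = 1 := by rw [Real.volume_Ioc]; norm_num
    have h2ge : 1 ≤ volume {x ∈ Set.Ioc (0:ℝ) 1 |
        ∃ᶠ n : ℕ in atTop, primeDigitVal (gaussMap^[n] x) = d n} := by
      calc (1:ℝ≥0∞) = volume (Set.Ioc (0:ℝ) 1) := by rw [Real.volume_Ioc]; norm_num
        _ ≤ volume ({x ∈ Set.Ioc (0:ℝ) 1 |
              ∃ᶠ n : ℕ in atTop, primeDigitVal (gaussMap^[n] x) = d n} ∪ ⋃ m, K m) :=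
            measure_mono hsub
        _ ≤ volume {x ∈ Set.Ioc (0:ℝ) 1 |
              ∃ᶠ n : ℕ in atTop, primeDigitVal (gaussMap^[n] x) = d n}
            + volume (⋃ m, K m) := measure_union_le _ _
        _ = volume {x ∈ Set.Ioc (0:ℝ) 1 |
              ∃ᶠ n : ℕ in atTop, primeDigitVal (gaussMap^[n] x) = d n} := by
            rw [measure_iUnion_null hK0, add_zero]
    exact le_antisymm h1le h2ge
  · -- summable case: null
    intro hsum
    set E : ℕ → Set ℝ := fun n => (gaussMap^[n]) ⁻¹' (Ik (d n)) ∩ Set.Ioc 0 1 with hE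
    have hsub : {x ∈ Set.Ioc (0:ℝ) 1 |
        ∃ᶠ n : ℕ in atTop, primeDigitVal (gaussMap^[n] x) = d n} ⊆ limsup E atTop := by
      rintro x ⟨hx01, hfreq⟩
      rw [mem_limsup_iff_frequently_mem]
      exact hfreq.mono fun n hn => ⟨(mem_Ik_iff_prime (hd n)).mpr hn, hx01⟩
    apply measure_mono_null hsub
    apply measure_limsup_atTop_eq_zero
    have hb : ∀ n, volume (E n) ≤ ENNReal.ofReal (2 * (((d n):ℝ)^2)⁻¹) :=
      fun n => conv_bound d hd2 n
    have hle : ∑' n, volume (E n) ≤ ∑' n, ENNReal.ofReal (2 * (((d n):ℝ)^2)⁻¹) :=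
      ENNReal.tsum_le_tsum hb
    have hsum2 : Summable (fun n : ℕ => 2 * (((d n):ℝ)^2)⁻¹) := by
      have := hsum.mul_left 2
      simpa [one_div, div_eq_mul_inv] using this
    rw [← ENNReal.ofReal_tsum_of_nonneg (fun n => by positivity) hsum2] at hle
    exact ne_top_of_le_ne_top ENNReal.ofReal_ne_top hle
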